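/- The symbolic lattice L satisfies the absorption laws: for all l₁, l₂ ∈ L, l₁ ⊔ (l₁ ⊓ l₂) = l₁ and l₁ ⊓ (l₁ ⊔ l₂) = l₁. -/
import Mathlib


inductive SymExpr (P U B F : Type*) where
  | bot : SymExpr P U B F
  | top : SymExpr P U B F
  | prim : P → SymExpr P U B F
  | unop : U → SymExpr P U B F → SymExpr P U B F
  | binop : B → SymExpr P U B F → SymExpr P U B F → SymExpr P U B F
  | fn : F → List (SymExpr P U B F) → SymExpr P U B F
  | phi : List (SymExpr P U B F) → SymExpr P U B F

namespace SymExpr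

variable {P U B F : Type*}

/-- The partial order `⊑` on the symbolic lattice. -/
inductive Le : SymExpr P U B F → SymExpr P U B F → Prop where
  | bot (l) : Le .bot l
  | top (l) : Le l .top
  | prim (p : P) : Le (.prim p) (.prim p)
  | unop {l l'} (u : U) : Le l l' → Le (.unop u l) (.unop u l')
  | binop {l₁ l₂ l₁' l₂'} (b : B) : Le l₁ l₁' → Le l₂ l₂' →
      Le (.binop b l₁ l₂) (.binop b l₁' l₂')
  | fn {ls ls'} (f : F) : List.Forall₂ Le ls ls' → Le (.fn f ls) (.fn f ls')
  | phi {ls ls'} : List.Forall₂ Le ls ls' → Le (.phi ls) (.phi ls')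

attribute [local instance] Classical.propDecidable

mutual
noncomputable def join : SymExpr P U B F → SymExpr P U B F → SymExpr P U B F
  | .bot, l => l
  | l, .bot => l
  | .prim p, .prim p' => if p = p' then .prim p else .top
  | .unop u l, .unop u' l' => if u = u' then .unop u (join l l') else .top
  | .binop b l₁ l₂, .binop b' l₁' l₂' =>
      if b = b' then .binop b (join l₁ l₁') (join l₂ l₂') else .top
  | .fn f ls, .fn f' ls' =>
      if f = f' ∧ ls.length = ls'.length then .fn f (joinList ls ls') else .top
  | .phi ls, .phi ls' =>
      if ls.length = ls'.length then .phi (joinList ls ls') else .top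
  | _, _ => .top

noncomputable def joinList : List (SymExpr P U B F) → List (SymExpr P U B F) → List (SymExpr P U B F)
  | l :: ls, l' :: ls' => join l l' :: joinList ls ls'
  | _, _ => []
end

mutual
noncomputable def meet : SymExpr P U B F → SymExpr P U B F → SymExpr P U B F
  | .top, l => l
  | l, .top => l
  | .prim p, .prim p' => if p = p' then .prim p else .bot
  | .unop u l, .unop u' l' => if u = u' then .unop u (meet l l') else .bot
  | .binop b l₁ l₂, .binop b' l₁' l₂' =>
      if b = b' then .binop b (meet l₁ l₁') (meet l₂ l₂') else .bot
  | .fn f ls, .fn f' ls' =>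
      if f = f' ∧ ls.length = ls'.length then .fn f (meetList ls ls') else .bot
  | .phi ls, .phi ls' =>
      if ls.length = ls'.length then .phi (meetList ls ls') else .bot
  | _, _ => .bot

noncomputable def meetList : List (SymExpr P U B F) → List (SymExpr P U B F) → List (SymExpr P U B F)
  | l :: ls, l' :: ls' => meet l l' :: meetList ls ls'
  | _, _ => []
end

mutual
def depth : SymExpr P U B F → ℕ
  | .bot => 0
  | .top => 0
  | .prim _ => 0
  | .unop _ l => 1 + depth l
  | .binop _ l₁ l₂ => 1 + max (depth l₁) (depth l₂)
  | .fn _ ls => 1 + depthList ls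
  | .phi ls => 1 + depthList ls

def depthList : List (SymExpr P U B F) → ℕ
  | [] => 0
  | l :: ls => max (depth l) (depthList ls)
end

/-- The widening truncation `T_i`. -/
def trunc : ℕ → SymExpr P U B F → SymExpr P U B F
  | _, .bot => .bot
  | _, .top => .top
  | _, .prim p => .prim p
  | 0, .unop _ _ => .top
  | 0, .binop _ _ _ => .top
  | 0, .fn _ _ => .top
  | 0, .phi _ => .top
  | i + 1, .unop u l => .unop u (trunc i l)
  | i + 1, .binop b l₁ l₂ => .binop b (trunc i l₁) (trunc i l₂)
  | i + 1, .fn f ls => .fn f (ls.map (fun l => trunc i l))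
  | i + 1, .phi ls => .phi (ls.map (fun l => trunc i l))

theorem join_bot_right (l : SymExpr P U B F) : join l .bot = l := by
  cases l <;> simp [join]

theorem meet_top_right (l : SymExpr P U B F) : meet l .top = l := by
  cases l <;> simp [meet]

mutual
theorem join_self : ∀ (l : SymExpr P U B F), join l l = l
  | .bot => by simp [join]
  | .top => by simp [join]
  | .prim p => by simp [join]
  | .unop u l => by simp [join, join_self l]
  | .binop b l₁ l₂ => by simp [join, join_self l₁, join_self l₂]
  | .fn f ls => by simp [join, joinList_self ls]
  | .phi ls => by simp [join, joinList_self ls]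

theorem joinList_self : ∀ (ls : List (SymExpr P U B F)), joinList ls ls = ls
  | [] => by simp [joinList]
  | l :: ls => by simp [joinList, join_self l, joinList_self ls]
end

mutual
theorem meet_self : ∀ (l : SymExpr P U B F), meet l l = l
  | .bot => by simp [meet]
  | .top => by simp [meet]
  | .prim p => by simp [meet]
  | .unop u l => by simp [meet, meet_self l]
  | .binop b l₁ l₂ => by simp [meet, meet_self l₁, meet_self l₂]
  | .fn f ls => by simp [meet, meetList_self ls]
  | .phi ls => by simp [meet, meetList_self ls]

theorem meetList_self : ∀ (ls : List (SymExpr P U B F)), meetList ls ls = ls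
  | [] => by simp [meetList]
  | l :: ls => by simp [meetList, meet_self l, meetList_self ls]
end

theorem meetList_length : ∀ (ls ls' : List (SymExpr P U B F)),
    ls.length = ls'.length → (meetList ls ls').length = ls.length
  | [], [], _ => rfl
  | l :: ls, l' :: ls', h => by
    simp [meetList, meetList_length ls ls' (by simpa using h)]
  | [], _ :: _, h => by simp at h
  | _ :: _, [], h => by simp at h

theorem joinList_length : ∀ (ls ls' : List (SymExpr P U B F)),
    ls.length = ls'.length → (joinList ls ls').length = ls.length
  | [], [], _ => rfl
  | l :: ls, l' :: ls', h => by
    simp [joinList, joinList_length ls ls' (by simpa using h)]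
  | [], _ :: _, h => by simp at h
  | _ :: _, [], h => by simp at h

mutual
theorem join_meet : ∀ (l l' : SymExpr P U B F), join l (meet l l') = l
  | .bot, l' => by cases l' <;> simp [meet, join]
  | .top, l' => by cases l' <;> simp [meet, join]
  | .prim p, l' => by
    cases l' with
    | prim p' => rcases eq_or_ne p p' with h | h <;> simp [meet, join, h]
    | _ => simp [meet, join]
  | .unop u l, l' => by
    cases l' with
    | top => simp [meet, join, join_self l]
    | unop u' m =>
      rcases eq_or_ne u u' with h | h <;>
        simp [meet, join, h, join_meet l m, join_bot_right]
    | _ => simp [meet, join, join_bot_right]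
  | .binop b l₁ l₂, l' => by
    cases l' with
    | top => simp [meet, join, join_self l₁, join_self l₂]
    | binop b' m₁ m₂ =>
      rcases eq_or_ne b b' with h | h <;>
        simp [meet, join, h, join_meet l₁ m₁, join_meet l₂ m₂, join_bot_right]
    | _ => simp [meet, join, join_bot_right]
  | .fn f ls, l' => by
    cases l' with
    | top => simp [meet, join, joinList_self ls]
    | fn f' ls' =>
      by_cases h : f = f' ∧ ls.length = ls'.length
      · simp [meet, join, h, meetList_length ls ls' h.2,
          joinList_meetList ls ls' h.2]
      · simp [meet, join, h, join_bot_right]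
    | _ => simp [meet, join, join_bot_right]
  | .phi ls, l' => by
    cases l' with
    | top => simp [meet, join, joinList_self ls]
    | phi ls' =>
      by_cases h : ls.length = ls'.length
      · simp [meet, join, h, meetList_length ls ls' h,
          joinList_meetList ls ls' h]
      · simp [meet, join, h, join_bot_right]
    | _ => simp [meet, join, join_bot_right]

theorem joinList_meetList : ∀ (ls ls' : List (SymExpr P U B F)),
    ls.length = ls'.length → joinList ls (meetList ls ls') = ls
  | [], [], _ => by simp [meetList, joinList]
  | l :: ls, l' :: ls', h => by
    simp [meetList, joinList, join_meet l l',
      joinList_meetList ls ls' (by simpa using h)]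
  | [], _ :: _, h => by simp at h
  | _ :: _, [], h => by simp at h
end

mutual
theorem meet_join : ∀ (l l' : SymExpr P U B F), meet l (join l l') = l
  | .bot, l' => by cases l' <;> simp [meet, join]
  | .top, l' => by cases l' <;> simp [meet, join]
  | .prim p, l' => by
    cases l' with
    | prim p' => rcases eq_or_ne p p' with h | h <;> simp [meet, join, h]
    | _ => simp [meet, join]
  | .unop u l, l' => by
    cases l' with
    | bot => simp [meet, join, meet_self l]
    | unop u' m =>
      rcases eq_or_ne u u' with h | h <;>
        simp [meet, join, h, meet_join l m, meet_top_right]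
    | _ => simp [meet, join, meet_top_right]
  | .binop b l₁ l₂, l' => by
    cases l' with
    | bot => simp [meet, join, meet_self l₁, meet_self l₂]
    | binop b' m₁ m₂ =>
      rcases eq_or_ne b b' with h | h <;>
        simp [meet, join, h, meet_join l₁ m₁, meet_join l₂ m₂, meet_top_right]
    | _ => simp [meet, join, meet_top_right]
  | .fn f ls, l' => by
    cases l' with
    | bot => simp [meet, join, meetList_self ls]
    | fn f' ls' =>
      by_cases h : f = f' ∧ ls.length = ls'.length
      · simp [meet, join, h, joinList_length ls ls' h.2,
          meetList_joinList ls ls' h.2]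
      · simp [meet, join, h, meet_top_right]
    | _ => simp [meet, join, meet_top_right]
  | .phi ls, l' => by
    cases l' with
    | bot => simp [meet, join, meetList_self ls]
    | phi ls' =>
      by_cases h : ls.length = ls'.length
      · simp [meet, join, h, joinList_length ls ls' h,
          meetList_joinList ls ls' h]
      · simp [meet, join, h, meet_top_right]
    | _ => simp [meet, join, meet_top_right]

theorem meetList_joinList : ∀ (ls ls' : List (SymExpr P U B F)),
    ls.length = ls'.length → meetList ls (joinList ls ls') = ls
  | [], [], _ => by simp [meetList, joinList]
  | l :: ls, l' :: ls', h => by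
    simp [meetList, joinList, meet_join l l',
      meetList_joinList ls ls' (by simpa using h)]
  | [], _ :: _, h => by simp at h
  | _ :: _, [], h => by simp at h
end

end SymExpr

/-- the absorption laws hold. -/
theorem SymExpr.absorption {P U B F : Type*} (l₁ l₂ : SymExpr P U B F) :
    l₁.join (l₁.meet l₂) = l₁ ∧ l₁.meet (l₁.join l₂) = l₁ :=
  ⟨join_meet l₁ l₂, meet_join l₁ l₂⟩
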